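/- Let α be a real number and (c_n)_{n≥1} a sequence of positive integers, with q_n, a_n, A_n the data of the generalized alternating-Sylvester expansion of α. For every n ≥ 1 with A_{n+1} ≠ 0, one has a_{n+1} + 1 > (c_{n+1}/c_n) · a_n · (a_n + 1). -/

import Mathlib

open Filter Topology

/-- The rational value `c/⌊c/x⌋` used at each step (0 if `x = 0`). -/
noncomputable def gasQaux (cn : ℕ) (x : ℝ) : ℝ :=
  if x = 0 then 0 else (cn : ℝ) / (⌊(cn : ℝ) / x⌋ : ℝ)

/-- `gasA c α n` is `A_n` of the generalized alternating-Sylvester expansion of `α`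
(for `n ≥ 1`; the value at `0` is a dummy). `A_1 = α - ⌊α⌋`, `A_{n+1} = q_n - A_n`. -/
noncomputable def gasA (c : ℕ → ℕ) (α : ℝ) : ℕ → ℝ
  | 0 => 0
  | 1 => α - ⌊α⌋
  | n + 2 => gasQaux (c (n + 1)) (gasA c α (n + 1)) - gasA c α (n + 1)

/-- `gasQ c α n` is `q_n`: `q_0 = ⌊α⌋`; for `n ≥ 1`, `q_n = c_n / a_n` if `A_n ≠ 0`, else `0`. -/
noncomputable def gasQ (c : ℕ → ℕ) (α : ℝ) : ℕ → ℝ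
  | 0 => (⌊α⌋ : ℤ)
  | n + 1 => gasQaux (c (n + 1)) (gasA c α (n + 1))

/-- `gasa c α n` is `a_n = ⌊c_n / A_n⌋` (meaningful when `A_n ≠ 0`). -/
noncomputable def gasa (c : ℕ → ℕ) (α : ℝ) (n : ℕ) : ℤ :=
  ⌊(c n : ℝ) / gasA c α n⌋

lemma gas_key (cn : ℕ) (hcn : 0 < cn) (x : ℝ) (hx0 : 0 < x) (hx1 : x < 1) :
    (cn : ℝ) ≤ (⌊(cn : ℝ) / x⌋ : ℝ) ∧ 0 ≤ gasQaux cn x - x ∧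
      gasQaux cn x - x < (cn : ℝ) / ((⌊(cn : ℝ) / x⌋ : ℝ) * ((⌊(cn : ℝ) / x⌋ : ℝ) + 1)) := by
  set a : ℤ := ⌊(cn : ℝ) / x⌋ with ha
  have hcn' : (1 : ℝ) ≤ (cn : ℝ) := by exact_mod_cast hcn
  have hdiv : (cn : ℝ) ≤ (cn : ℝ) / x := by
    rw [le_div_iff₀ hx0]; nlinarith
  have hale : (cn : ℝ) ≤ (a : ℝ) := by
    have : (cn : ℤ) ≤ a := by
      rw [ha, Int.le_floor]; exact_mod_cast hdiv
    exact_mod_cast this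
  have ha1 : (1 : ℝ) ≤ (a : ℝ) := le_trans hcn' hale
  have ha0 : (0 : ℝ) < (a : ℝ) := by linarith
  have hfl : (a : ℝ) ≤ (cn : ℝ) / x := Int.floor_le _
  have hfu : (cn : ℝ) / x < (a : ℝ) + 1 := Int.lt_floor_add_one _
  have hq : gasQaux cn x = (cn : ℝ) / (a : ℝ) := by
    rw [gasQaux, if_neg (ne_of_gt hx0)]
  have hlow : x ≤ (cn : ℝ) / (a : ℝ) := by
    rw [le_div_iff₀ ha0]
    calc x * a ≤ (cn : ℝ) / x * x := by nlinarith
    _ = (cn : ℝ) := div_mul_cancel₀ _ (ne_of_gt hx0)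
  have hup : (cn : ℝ) / ((a : ℝ) + 1) < x := by
    rw [div_lt_iff₀ (by linarith)]
    calc (cn : ℝ) = (cn : ℝ) / x * x := (div_mul_cancel₀ _ (ne_of_gt hx0)).symm
    _ < ((a : ℝ) + 1) * x := by nlinarith
    _ = x * ((a : ℝ) + 1) := mul_comm _ _
  refine ⟨hale, by rw [hq]; linarith, ?_⟩
  rw [hq]
  have heq : (cn : ℝ) / (a : ℝ) - (cn : ℝ) / ((a : ℝ) + 1) =
      (cn : ℝ) / ((a : ℝ) * ((a : ℝ) + 1)) := by
    field_simp; ring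
  linarith [heq ▸ sub_lt_sub_left hup ((cn : ℝ) / (a : ℝ))]

lemma gasA_bounds (c : ℕ → ℕ) (hc : ∀ n, 1 ≤ n → 0 < c n) (α : ℝ) :
    ∀ n, 1 ≤ n → 0 ≤ gasA c α n ∧ gasA c α n < 1 := by
  intro n hn
  induction n with
  | zero => omega
  | succ m ih =>
    rcases Nat.eq_or_lt_of_le hn with h | h
    · simp only [← h]
      show 0 ≤ α - (⌊α⌋ : ℝ) ∧ α - (⌊α⌋ : ℝ) < 1
      exact ⟨by linarith [Int.floor_le α], by linarith [Int.lt_floor_add_one α]⟩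
    · have hm : 1 ≤ m := by omega
      obtain ⟨h0, h1⟩ := ih hm
      obtain ⟨m, rfl⟩ : ∃ k, m = k + 1 := ⟨m - 1, by omega⟩
      show 0 ≤ gasQaux (c (m+1)) (gasA c α (m+1)) - gasA c α (m+1) ∧
        gasQaux (c (m+1)) (gasA c α (m+1)) - gasA c α (m+1) < 1
      rcases eq_or_lt_of_le h0 with h2 | h2
      · rw [gasQaux, if_pos h2.symm, ← h2]
        norm_num
      · obtain ⟨hale, hA0, hA1⟩ := gas_key (c (m+1)) (hc (m+1) (by omega)) _ h2 h1
        refine ⟨hA0, lt_of_lt_of_le hA1 ?_⟩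
        set a : ℝ := (⌊(c (m+1) : ℝ) / gasA c α (m+1)⌋ : ℝ)
        have h1a : (1:ℝ) ≤ a :=
          le_trans (by exact_mod_cast hc (m+1) (by omega)) hale
        rw [div_le_one (by nlinarith)]
        nlinarith

/-- For every $n \ge 1$ with $A_{n+1} \neq 0$,
$a_{n+1} + 1 > (c_{n+1}/c_n) a_n (a_n + 1)$. -/
theorem gas_an_growth (c : ℕ → ℕ) (hc : ∀ n, 1 ≤ n → 0 < c n) (α : ℝ) :
    ∀ n, 1 ≤ n → gasA c α (n + 1) ≠ 0 →
      ((c (n + 1) : ℝ) / (c n : ℝ)) * (gasa c α n : ℝ) * ((gasa c α n : ℝ) + 1) <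
        (gasa c α (n + 1) : ℝ) + 1 := by
  intro n hn hne
  obtain ⟨m, rfl⟩ : ∃ k, n = k + 1 := ⟨n - 1, by omega⟩
  have hAeq : gasA c α (m + 2) =
      gasQaux (c (m+1)) (gasA c α (m+1)) - gasA c α (m+1) := rfl
  have hAn : gasA c α (m+1) ≠ 0 := by
    intro h
    apply hne
    rw [hAeq, h, gasQaux, if_pos rfl, sub_zero]
  obtain ⟨h0, h1⟩ := gasA_bounds c hc α (m+1) (by omega)
  have h2 : 0 < gasA c α (m+1) := lt_of_le_of_ne h0 (Ne.symm hAn)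
  obtain ⟨hale, hA0, hA1⟩ := gas_key (c (m+1)) (hc (m+1) (by omega)) _ h2 h1
  rw [← hAeq] at hA0 hA1
  have hA2 : 0 < gasA c α (m+2) := lt_of_le_of_ne hA0 (Ne.symm hne)
  set a : ℝ := (⌊(c (m+1) : ℝ) / gasA c α (m+1)⌋ : ℝ) with hadef
  have hga : (gasa c α (m+1) : ℝ) = a := rfl
  have h1a : (1:ℝ) ≤ a := le_trans (by exact_mod_cast hc (m+1) (by omega)) hale
  have hc2 : (0:ℝ) < (c (m+2) : ℝ) := by exact_mod_cast hc (m+2) (by omega)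
  have hc1 : (0:ℝ) < (c (m+1) : ℝ) := by exact_mod_cast hc (m+1) (by omega)
  have step1 : (c (m+2) : ℝ) / ((c (m+1) : ℝ) / (a * (a + 1))) <
      (c (m+2) : ℝ) / gasA c α (m+2) :=
    div_lt_div_of_pos_left hc2 hA2 hA1
  have step2 : (c (m+2) : ℝ) / gasA c α (m+2) < (gasa c α (m+2) : ℝ) + 1 :=
    Int.lt_floor_add_one _
  have heq : (c (m+2) : ℝ) / ((c (m+1) : ℝ) / (a * (a + 1))) =
      (c (m+2) : ℝ) / (c (m+1) : ℝ) * a * (a + 1) := by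
    field_simp
  rw [hga]
  calc (c (m+1+1) : ℝ) / (c (m+1) : ℝ) * a * (a + 1)
      = (c (m+2) : ℝ) / ((c (m+1) : ℝ) / (a * (a + 1))) := heq.symm
    _ < (c (m+2) : ℝ) / gasA c α (m+2) := step1
    _ < (gasa c α (m+2) : ℝ) + 1 := step2
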